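/- Let Q ∈ ℝ^{n×n}, with a_{i,j} := Q_{i,j} + Q_{j,i} for i ≠ j, a_{i,i} := Q_{i,i}, and S_{i,j} := Σ_{k ≠ i,j} max{0, a_{j,k} − a_{i,k}} + a_{j,j} − a_{i,i}. Define the edge set E := { (i, j) : i ≠ j, S_{i,j} ≤ 0, and (S_{j,i} ≤ 0 implies i < j) }. Then the directed graph G = (V, E) on V = {1,…,n} contains no directed cycle, i.e., G is a directed acyclic graph and hence an order of the n binary variables. -/

import Mathlib

open Finset

/-- The directed graph on `{1,…,n}` with edge set `E` has no directed cycle. -/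
def IsAcyclicEdges (n : ℕ) (E : Finset (Fin n × Fin n)) : Prop :=
  ∀ i : Fin n, ¬ Relation.TransGen (fun a b => (a, b) ∈ E) i i

/-- Coefficient `a_{i,j}` of `x_i x_j` (or of `x_i` if `i = j`) in `x ⊤ Q x`. -/
def aCoef (n : ℕ) (Q : Matrix (Fin n) (Fin n) ℝ) (i j : Fin n) : ℝ :=
  if i = j then Q i i else Q i j + Q j i

/-- `S_{i,j} = ∑_{k ≠ i,j} max {0, a_{j,k} − a_{i,k}} + a_{j,j} − a_{i,i}`. -/
noncomputable def Sval (n : ℕ) (Q : Matrix (Fin n) (Fin n) ℝ) (i j : Fin n) : ℝ :=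
  (∑ k ∈ univ.filter (fun k => k ≠ i ∧ k ≠ j), max 0 (aCoef n Q j k - aCoef n Q i k))
    + aCoef n Q j j - aCoef n Q i i

/-- The edge set extracted from `Q`:
`E = {(i,j) : i ≠ j, S_{i,j} ≤ 0, and (S_{j,i} ≤ 0 → i < j)}`. -/
noncomputable def ordE (n : ℕ) (Q : Matrix (Fin n) (Fin n) ℝ) :
    Finset (Fin n × Fin n) :=
  univ.filter (fun p : Fin n × Fin n =>
    p.1 ≠ p.2 ∧ Sval n Q p.1 p.2 ≤ 0 ∧ (Sval n Q p.2 p.1 ≤ 0 → p.1 < p.2))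

lemma aCoef_symm (n : ℕ) (Q : Matrix (Fin n) (Fin n) ℝ) (i j : Fin n) :
    aCoef n Q i j = aCoef n Q j i := by
  unfold aCoef
  rcases eq_or_ne i j with h | h
  · subst h; simp
  · simp only [h, h.symm, if_false]; ring

/-- Potential `g(i) = ∑_{k ≠ i} a_{i,k} + a_{i,i}`. -/
noncomputable def gval (n : ℕ) (Q : Matrix (Fin n) (Fin n) ℝ) (i : Fin n) : ℝ :=
  (∑ k ∈ univ.filter (fun k => k ≠ i), aCoef n Q i k) + aCoef n Q i i

lemma filter_ne_eq_insert {n : ℕ} {i j : Fin n} (hij : i ≠ j) :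
    univ.filter (fun k : Fin n => k ≠ j)
      = insert i (univ.filter (fun k => k ≠ i ∧ k ≠ j)) := by
  ext k
  simp only [mem_filter, mem_univ, true_and, mem_insert]
  constructor
  · intro hk
    by_cases hki : k = i
    · exact Or.inl hki
    · exact Or.inr ⟨hki, hk⟩
  · rintro (rfl | ⟨-, hk⟩)
    · exact hij
    · exact hk

lemma filter_swap {n : ℕ} (i j : Fin n) :
    univ.filter (fun k : Fin n => k ≠ j ∧ k ≠ i)
      = univ.filter (fun k => k ≠ i ∧ k ≠ j) := by
  apply filter_congr; intro k _; simp [and_comm]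

lemma gsub (n : ℕ) (Q : Matrix (Fin n) (Fin n) ℝ) {i j : Fin n} (hij : i ≠ j) :
    gval n Q j - gval n Q i
      = (∑ k ∈ univ.filter (fun k => k ≠ i ∧ k ≠ j),
          (aCoef n Q j k - aCoef n Q i k)) + aCoef n Q j j - aCoef n Q i i := by
  have h1 : gval n Q j = aCoef n Q j i
      + (∑ k ∈ univ.filter (fun k => k ≠ i ∧ k ≠ j), aCoef n Q j k)
      + aCoef n Q j j := by
    unfold gval
    rw [filter_ne_eq_insert hij, sum_insert (by simp)]
  have h2 : gval n Q i = aCoef n Q i j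
      + (∑ k ∈ univ.filter (fun k => k ≠ i ∧ k ≠ j), aCoef n Q i k)
      + aCoef n Q i i := by
    unfold gval
    rw [filter_ne_eq_insert hij.symm, sum_insert (by simp), filter_swap]
  rw [h1, h2, aCoef_symm n Q j i, Finset.sum_sub_distrib]
  ring

/-- Lexicographic potential that strictly decreases along edges. -/
noncomputable def psiF (n : ℕ) (Q : Matrix (Fin n) (Fin n) ℝ) (i : Fin n) :
    ℝ ×ₗ (ℝ ×ₗ ℝ) :=
  toLex (gval n Q i, toLex (aCoef n Q i i, -((i : ℕ) : ℝ)))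

lemma edge_lt (n : ℕ) (Q : Matrix (Fin n) (Fin n) ℝ) {i j : Fin n}
    (h : (i, j) ∈ ordE n Q) : psiF n Q j < psiF n Q i := by
  simp only [ordE, mem_filter, mem_univ, true_and] at h
  obtain ⟨hij, hS, hcond⟩ := h
  set T := univ.filter (fun k : Fin n => k ≠ i ∧ k ≠ j) with hT
  have hd : ∀ k ∈ T, aCoef n Q j k - aCoef n Q i k
      ≤ max 0 (aCoef n Q j k - aCoef n Q i k) := fun k _ => le_max_right _ _
  have hsum : ∑ k ∈ T, (aCoef n Q j k - aCoef n Q i k)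
      ≤ ∑ k ∈ T, max 0 (aCoef n Q j k - aCoef n Q i k) := Finset.sum_le_sum hd
  have hgsub := gsub n Q hij
  have hSval : Sval n Q i j
      = (∑ k ∈ T, max 0 (aCoef n Q j k - aCoef n Q i k))
        + aCoef n Q j j - aCoef n Q i i := rfl
  have hg : gval n Q j ≤ gval n Q i := by
    have : gval n Q j - gval n Q i ≤ Sval n Q i j := by
      rw [hgsub, hSval]; linarith
    linarith
  simp only [psiF]
  rcases lt_or_eq_of_le hg with hlt | heq
  · exact Prod.Lex.lt_iff.mpr (Or.inl hlt)
  · -- first coordinates equal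
    have hzero : (∑ k ∈ T, (aCoef n Q j k - aCoef n Q i k))
        + aCoef n Q j j - aCoef n Q i i = 0 := by
      rw [← hgsub, heq]; ring
    have hsumeq : ∑ k ∈ T, (aCoef n Q j k - aCoef n Q i k)
        = ∑ k ∈ T, max 0 (aCoef n Q j k - aCoef n Q i k) := by
      have h1 : (∑ k ∈ T, max 0 (aCoef n Q j k - aCoef n Q i k))
          + aCoef n Q j j - aCoef n Q i i ≤ 0 := by rw [← hSval]; exact hS
      linarith
    have hdk : ∀ k ∈ T, 0 ≤ aCoef n Q j k - aCoef n Q i k := by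
      intro k hk
      have := ((Finset.sum_eq_sum_iff_of_le hd).1 hsumeq) k hk
      rw [this]; exact le_max_left _ _
    have hsumnn : 0 ≤ ∑ k ∈ T, (aCoef n Q j k - aCoef n Q i k) :=
      Finset.sum_nonneg hdk
    have haa : aCoef n Q j j ≤ aCoef n Q i i := by linarith
    rcases lt_or_eq_of_le haa with hlt2 | heq2
    · exact Prod.Lex.lt_iff.mpr (Or.inr ⟨heq, Prod.Lex.lt_iff.mpr (Or.inl hlt2)⟩)
    · -- second coordinates equal: all differences vanish, so S j i = 0
      have hsum0 : ∑ k ∈ T, (aCoef n Q j k - aCoef n Q i k) = 0 := by linarith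
      have hall0 : ∀ k ∈ T, aCoef n Q j k - aCoef n Q i k = 0 :=
        (Finset.sum_eq_zero_iff_of_nonneg hdk).1 hsum0
      have hSji : Sval n Q j i ≤ 0 := by
        unfold Sval
        rw [filter_swap]
        have : ∑ k ∈ T, max 0 (aCoef n Q i k - aCoef n Q j k) = 0 := by
          apply Finset.sum_eq_zero
          intro k hk
          have h0 := hall0 k hk
          have : aCoef n Q i k - aCoef n Q j k = 0 := by linarith
          rw [this]; simp
        rw [← hT, this]
        linarith
      have hij' : i < j := hcond hSji
      have h3 : -((j : ℕ) : ℝ) < -((i : ℕ) : ℝ) := by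
        have : ((i : ℕ) : ℝ) < ((j : ℕ) : ℝ) := by exact_mod_cast hij'
        linarith
      exact Prod.Lex.lt_iff.mpr (Or.inr ⟨heq,
        Prod.Lex.lt_iff.mpr (Or.inr ⟨heq2, h3⟩)⟩)

theorem stmt13 (n : ℕ) (Q : Matrix (Fin n) (Fin n) ℝ) :
    IsAcyclicEdges n (ordE n Q) := by
  intro i h
  have h' : Relation.TransGen (fun a b : Fin n => psiF n Q b < psiF n Q a) i i :=
    Relation.TransGen.mono (fun a b hab => edge_lt n Q hab) _ _ h
  have htrans : Transitive (fun a b : Fin n => psiF n Q b < psiF n Q a) :=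
    fun a b c hab hbc => lt_trans hbc hab
  rw [@Relation.transGen_eq_self _ _ ⟨fun a b c => @htrans a b c⟩] at h'
  exact lt_irrefl _ h'
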